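/- (Full amalgamation) Let α ∈ ω+1 and let A, B, C ∈ K_α with A = B ∩ C and A ≤* B (A is closed in B). Then the free join of B and C over A — the graph on vertex set B ∪ C whose edge set is the union of the edge sets of B and of C — belongs to K_α, and C is closed in it (C ≤* B ⊕_A C). -/

import Mathlib

open SimpleGraph

/-- The predimension of a finite set `A` of vertices: `|A| - e(A)`, where `e(A)` is the
number of edges of the induced subgraph on `A`. -/
noncomputable def delta {V : Type*} (G : SimpleGraph V) (A : Finset V) : ℤ :=
  (A.card : ℤ) - (Nat.card (G.induce (A : Set V)).edgeSet : ℤ)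

/-- `A` is closed in `B` (`A ≤* B`): `A ⊆ B` and `δ(C) > δ(A)` for every finite `C` with
`A ⊊ C ⊆ B`. -/
def Closed {V : Type*} (G : SimpleGraph V) (A B : Finset V) : Prop :=
  A ⊆ B ∧ ∀ C : Finset V, A ⊂ C → C ⊆ B → delta G A < delta G C

/-- `A` is weakly closed in `B` (`A ≤ B`). -/
def WClosed {V : Type*} (G : SimpleGraph V) (A B : Finset V) : Prop :=
  A ⊆ B ∧ ∀ C : Finset V, A ⊆ C → C ⊆ B → delta G A ≤ delta G C

/-- `A ≤* M` : `A` is closed in every finite superset inside the graph. -/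
def ClosedIn {V : Type*} (G : SimpleGraph V) (A : Finset V) : Prop :=
  ∀ B : Finset V, A ⊆ B → Closed G A B

def WClosedIn {V : Type*} (G : SimpleGraph V) (A : Finset V) : Prop :=
  ∀ B : Finset V, A ⊆ B → WClosed G A B

/-- `(A,B)` is a minimal pair. -/
def MinPair {V : Type*} (G : SimpleGraph V) (A B : Finset V) : Prop :=
  A ⊆ B ∧ (∀ C : Finset V, A ⊆ C → C ⊂ B → Closed G A C) ∧ ¬ Closed G A B

def WMinPair {V : Type*} (G : SimpleGraph V) (A B : Finset V) : Prop :=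
  A ⊆ B ∧ (∀ C : Finset V, A ⊆ C → C ⊂ B → WClosed G A C) ∧ ¬ WClosed G A B

/-- `B` is an intrinsic extension of `A`. -/
def IntrinsicExt {V : Type*} (G : SimpleGraph V) (A B : Finset V) : Prop :=
  A ⊆ B ∧ ∀ C : Finset V, A ⊆ C → C ⊂ B → ¬ Closed G C B

def WIntrinsicExt {V : Type*} (G : SimpleGraph V) (A B : Finset V) : Prop :=
  A ⊆ B ∧ ∀ C : Finset V, A ⊆ C → C ⊂ B → ¬ WClosed G C B

/-- The closure `cl*_M(N)`. -/
def clStar {V : Type*} (G : SimpleGraph V) (N : Set V) : Set V :=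
  {b | ∃ A E : Finset V, (A : Set V) ⊆ N ∧ IntrinsicExt G A E ∧ b ∈ E}

/-- The weak closure `cl_M(N)`. -/
def clWeak {V : Type*} (G : SimpleGraph V) (N : Set V) : Set V :=
  {b | ∃ A E : Finset V, (A : Set V) ⊆ N ∧ WIntrinsicExt G A E ∧ b ∈ E}

/-- Membership of the finite induced subgraph on `A` in the class `K_α`, for
`α ∈ ω + 1` (coded as `α : ℕ∞`, where `⊤` codes `ω`):
* every nonempty subset has positive predimension (i.e. it is a forest); and
* if `α = n` with `1 ≤ n < ω`: no vertex having at least `n + 2` neighbours in `A` is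
  the starting point of a path of length `2n + 1` inside `A`;
* if `α = 0`: every vertex has at most `3` neighbours in `A`;
* if `α = ω`: no further condition. -/
def InK {V : Type*} (α : ℕ∞) (G : SimpleGraph V) (A : Finset V) : Prop :=
  (∀ S : Finset V, S ⊆ A → S.Nonempty → 0 < delta G S) ∧
  ∀ n : ℕ, α = (n : ℕ∞) →
    if n = 0 then
      ∀ a ∈ A, ∀ s : Finset V, s ⊆ A → (∀ b ∈ s, G.Adj a b) → s.card ≤ 3
    else
      ∀ a ∈ A, (∃ s : Finset V, s ⊆ A ∧ (∀ b ∈ s, G.Adj a b) ∧ n + 2 ≤ s.card) →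
        ¬ ∃ (y : V) (p : G.Walk a y),
            p.IsPath ∧ p.length = 2 * n + 1 ∧ ∀ v ∈ p.support, v ∈ A


section Helpers

variable {V : Type*} [DecidableEq V]

/-- The set of edges of `G` all of whose endpoints lie in `S`. -/
def eSet (G : SimpleGraph V) (S : Finset V) : Set (Sym2 V) :=
  {e | e ∈ G.edgeSet ∧ ∀ v ∈ e, v ∈ S}

omit [DecidableEq V] in
lemma eSet_finite (G : SimpleGraph V) (S : Finset V) : (eSet G S).Finite := by
  apply Set.Finite.subset (S.sym2 : Finset (Sym2 V)).finite_toSet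
  intro e he
  simpa [Finset.mem_sym2_iff, Set.mem_sym2_iff_subset, Set.subset_def] using he.2

omit [DecidableEq V] in
lemma mem_eSet_of (G : SimpleGraph V) (S : Finset V)
    (e : (G.induce (S : Set V)).edgeSet) : Sym2.map Subtype.val e.1 ∈ eSet G S := by
  obtain ⟨e, he⟩ := e
  induction e with
  | _ x y =>
    rw [mem_edgeSet] at he
    refine ⟨he, ?_⟩
    intro v hv
    rw [Sym2.map_pair_eq, Sym2.mem_iff] at hv
    rcases hv with h | h <;> subst h <;> exact Finset.coe_mem _

omit [DecidableEq V] in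
lemma card_eq_eSet (G : SimpleGraph V) (S : Finset V) :
    Nat.card (G.induce (S : Set V)).edgeSet = (eSet G S).ncard := by
  rw [← Nat.card_coe_set_eq]
  apply Nat.card_congr
  refine Equiv.ofBijective (fun e => ⟨Sym2.map Subtype.val e.1, mem_eSet_of G S e⟩) ⟨?_, ?_⟩
  · intro e f hef
    apply Subtype.ext
    exact Sym2.map.injective Subtype.val_injective (congrArg Subtype.val hef)
  · rintro ⟨e, he, hv⟩
    induction e with
    | _ x y =>
      have hx : x ∈ S := hv x (Sym2.mem_mk_left x y)
      have hy : y ∈ S := hv y (Sym2.mem_mk_right x y)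
      refine ⟨⟨s(⟨x, hx⟩, ⟨y, hy⟩), ?_⟩, ?_⟩
      · rw [mem_edgeSet]
        exact he
      · simp

omit [DecidableEq V] in
lemma delta_eSet (G : SimpleGraph V) (S : Finset V) :
    delta G S = (S.card : ℤ) - ((eSet G S).ncard : ℤ) := by
  rw [delta, card_eq_eSet]

omit [DecidableEq V] in
lemma eSet_congr (G H : SimpleGraph V) (S : Finset V)
    (h : ∀ x y, x ∈ S → y ∈ S → (G.Adj x y ↔ H.Adj x y)) : eSet G S = eSet H S := by
  ext e
  induction e with
  | _ x y =>
    constructor <;> rintro ⟨he, hv⟩ <;>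
      refine ⟨?_, hv⟩ <;> rw [mem_edgeSet] at he ⊢
    · exact (h x y (hv x (Sym2.mem_mk_left x y)) (hv y (Sym2.mem_mk_right x y))).1 he
    · exact (h x y (hv x (Sym2.mem_mk_left x y)) (hv y (Sym2.mem_mk_right x y))).2 he

omit [DecidableEq V] in
lemma delta_congr (G H : SimpleGraph V) (S : Finset V)
    (h : ∀ x y, x ∈ S → y ∈ S → (G.Adj x y ↔ H.Adj x y)) : delta G S = delta H S := by
  rw [delta_eSet, delta_eSet, eSet_congr G H S h]

omit [DecidableEq V] in
lemma delta_empty (G : SimpleGraph V) : delta G (∅ : Finset V) = 0 := by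
  have : eSet G (∅ : Finset V) = ∅ := by
    ext e
    induction e with
    | _ x y =>
      simp only [eSet, Set.mem_setOf_eq, Set.mem_empty_iff_false, iff_false, not_and]
      intro _ h
      exact absurd (h x (Sym2.mem_mk_left x y)) (Finset.notMem_empty x)
  rw [delta_eSet, this]
  simp

lemma delta_union (G : SimpleGraph V) (S1 S2 : Finset V) (hd : Disjoint S1 S2)
    (hcross : ∀ x y, x ∈ S1 → y ∈ S2 → ¬ G.Adj x y) :
    delta G (S1 ∪ S2) = delta G S1 + delta G S2 := by
  have hE : eSet G (S1 ∪ S2) = eSet G S1 ∪ eSet G S2 := by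
    ext e
    induction e with
    | _ x y =>
      constructor
      · rintro ⟨he, hv⟩
        have hx := hv x (Sym2.mem_mk_left x y)
        have hy := hv y (Sym2.mem_mk_right x y)
        rw [Finset.mem_union] at hx hy
        have hadj : G.Adj x y := (mem_edgeSet G).mp he
        rcases hx with hx | hx <;> rcases hy with hy | hy
        · exact Or.inl ⟨he, by
            intro v hv'
            rw [Sym2.mem_iff] at hv'
            rcases hv' with h | h <;> subst h <;> assumption⟩
        · exact absurd hadj (hcross x y hx hy)
        · exact absurd hadj.symm (hcross y x hy hx)
        · exact Or.inr ⟨he, by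
            intro v hv'
            rw [Sym2.mem_iff] at hv'
            rcases hv' with h | h <;> subst h <;> assumption⟩
      · rintro (⟨he, hv⟩ | ⟨he, hv⟩) <;> exact ⟨he, fun v hv' =>
          Finset.mem_union.mpr (by first | exact Or.inl (hv v hv') | exact Or.inr (hv v hv'))⟩
  have hEd : Disjoint (eSet G S1) (eSet G S2) := by
    rw [Set.disjoint_left]
    rintro e ⟨he, hv1⟩ ⟨_, hv2⟩
    induction e with
    | _ x y =>
      have hx1 := hv1 x (Sym2.mem_mk_left x y)
      have hx2 := hv2 x (Sym2.mem_mk_left x y)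
      exact Finset.disjoint_left.mp hd hx1 hx2
  have hcard : (S1 ∪ S2).card = S1.card + S2.card := Finset.card_union_of_disjoint hd
  have hncard : (eSet G (S1 ∪ S2)).ncard = (eSet G S1).ncard + (eSet G S2).ncard := by
    rw [hE, Set.ncard_union_eq hEd (eSet_finite G S1) (eSet_finite G S2)]
  rw [delta_eSet, delta_eSet, delta_eSet, hcard, hncard]
  push_cast
  ring

lemma closed_no_cross (GB : SimpleGraph V) (A B : Finset V)
    (hGB : ∀ x y : V, GB.Adj x y → x ∈ B ∧ y ∈ B)
    (hclosed : Closed GB A B) :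
    ∀ a b, a ∈ A → GB.Adj a b → b ∈ A := by
  intro a b ha hab
  by_contra hb
  have hbB : b ∈ B := (hGB a b hab).2
  have hss : A ⊂ insert b A := Finset.ssubset_insert hb
  have hsub : insert b A ⊆ B := Finset.insert_subset hbB hclosed.1
  have hlt := hclosed.2 (insert b A) hss hsub
  have hEss : eSet GB A ⊂ eSet GB (insert b A) := by
    constructor
    · rintro e ⟨he, hv⟩
      exact ⟨he, fun v hv' => Finset.mem_insert_of_mem (hv v hv')⟩
    · intro hsub'
      have hmem : s(a, b) ∈ eSet GB (insert b A) := by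
        refine ⟨(mem_edgeSet GB).mpr hab, ?_⟩
        intro v hv
        rw [Sym2.mem_iff] at hv
        rcases hv with h | h
        · rw [h]; exact Finset.mem_insert_of_mem ha
        · rw [h]; exact Finset.mem_insert_self b A
      exact hb ((hsub' hmem).2 b (Sym2.mem_mk_right a b))
  have hcard : (eSet GB A).ncard < (eSet GB (insert b A)).ncard :=
    Set.ncard_lt_ncard hEss (eSet_finite GB (insert b A))
  have hcardA : (insert b A).card = A.card + 1 := Finset.card_insert_of_notMem hb
  rw [delta_eSet, delta_eSet, hcardA] at hlt
  push_cast at hlt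
  omega

end Helpers

/-- Full amalgamation: Let `α ∈ ω+1` and `A, B, C ∈ K_α` with
`A = B ∩ C` and `A ≤* B`. Then the free join of `B` and `C` over `A` — the graph on
`B ∪ C` whose edge set is the union of the edge sets of `B` and `C` — belongs to
`K_α`, and `C` is closed in it. Here `B` and `C` are presented as graphs `GB`, `GC`
on a common vertex set, with all edges inside `B` resp. `C`, agreeing on `A = B ∩ C`;
the free join is `GB ⊔ GC`. -/
theorem stmt_14 {V : Type*} [DecidableEq V] (α : ℕ∞) (A B C : Finset V)
    (GB GC : SimpleGraph V)
    (hGB : ∀ x y : V, GB.Adj x y → x ∈ B ∧ y ∈ B)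
    (hGC : ∀ x y : V, GC.Adj x y → x ∈ C ∧ y ∈ C)
    (hA : A = B ∩ C)
    (hagree : ∀ a a' : V, a ∈ A → a' ∈ A → (GB.Adj a a' ↔ GC.Adj a a'))
    (hBK : InK α GB B) (hCK : InK α GC C)
    (hclosed : Closed GB A B) :
    InK α (GB ⊔ GC) (B ∪ C) ∧ Closed (GB ⊔ GC) C (B ∪ C) := by
  have hAB : A ⊆ B := by rw [hA]; exact Finset.inter_subset_left
  have hAC : A ⊆ C := by rw [hA]; exact Finset.inter_subset_right
  have memA : ∀ x, x ∈ B → x ∈ C → x ∈ A := fun x hb hc => by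
    rw [hA]; exact Finset.mem_inter.mpr ⟨hb, hc⟩
  have key : ∀ a b, a ∈ A → GB.Adj a b → b ∈ A := closed_no_cross GB A B hGB hclosed
  have adjC : ∀ x y, x ∈ C → (GB ⊔ GC).Adj x y → GC.Adj x y ∧ y ∈ C := by
    intro x y hx hxy
    rw [sup_adj] at hxy
    rcases hxy with h | h
    · have hxA := memA x (hGB x y h).1 hx
      have hyA := key x y hxA h
      exact ⟨(hagree x y hxA hyA).1 h, hAC hyA⟩
    · exact ⟨h, (hGC x y h).2⟩
  have adjB' : ∀ x y, x ∈ B → x ∉ C → (GB ⊔ GC).Adj x y → GB.Adj x y ∧ y ∈ B ∧ y ∉ C := by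
    intro x y hxB hxC hxy
    rw [sup_adj] at hxy
    rcases hxy with h | h
    · refine ⟨h, (hGB x y h).2, ?_⟩
      intro hyC
      exact hxC (hAC (key y x (memA y (hGB x y h).2 hyC) h.symm))
    · exact absurd (hGC x y h).1 hxC
  have dG : ∀ S : Finset V, S ⊆ B ∪ C →
      delta (GB ⊔ GC) S = delta GB (S \ C) + delta GC (S ∩ C) := by
    intro S hS
    have hsub1 : S \ C ⊆ B := by
      intro x hx
      rcases Finset.mem_sdiff.mp hx with ⟨hxS, hxC⟩
      rcases Finset.mem_union.mp (hS hxS) with h | h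
      · exact h
      · exact absurd h hxC
    have hcross : ∀ x y, x ∈ S \ C → y ∈ S ∩ C → ¬ (GB ⊔ GC).Adj x y := by
      intro x y hx hy hadj
      exact (adjB' x y (hsub1 hx) (Finset.mem_sdiff.mp hx).2 hadj).2.2
        (Finset.mem_inter.mp hy).2
    have hu := delta_union (GB ⊔ GC) (S \ C) (S ∩ C)
      (Finset.disjoint_sdiff_inter S C) hcross
    rw [Finset.sdiff_union_inter] at hu
    rw [hu]
    congr 1
    · refine delta_congr _ GB _ (fun x y hx hy => ⟨?_, ?_⟩)
      · intro h
        exact (adjB' x y (hsub1 hx) (Finset.mem_sdiff.mp hx).2 h).1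
      · intro h
        exact (sup_adj GB GC x y).mpr (Or.inl h)
    · refine delta_congr _ GC _ (fun x y hx hy => ⟨?_, ?_⟩)
      · intro h
        exact (adjC x y (Finset.mem_inter.mp hx).2 h).1
      · intro h
        exact (sup_adj GB GC x y).mpr (Or.inr h)
  have hBnonneg : ∀ T : Finset V, T ⊆ B → 0 ≤ delta GB T := by
    intro T hT
    rcases T.eq_empty_or_nonempty with h | h
    · rw [h, delta_empty]
    · exact (hBK.1 T hT h).le
  have hCnonneg : ∀ T : Finset V, T ⊆ C → 0 ≤ delta GC T := by
    intro T hT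
    rcases T.eq_empty_or_nonempty with h | h
    · rw [h, delta_empty]
    · exact (hCK.1 T hT h).le
  have hsdiffB : ∀ S : Finset V, S ⊆ B ∪ C → S \ C ⊆ B := by
    intro S hS x hx
    rcases Finset.mem_sdiff.mp hx with ⟨hxS, hxC⟩
    rcases Finset.mem_union.mp (hS hxS) with h | h
    · exact h
    · exact absurd h hxC
  -- the walk lemmas
  have walkC : ∀ (u w : V) (p : (GB ⊔ GC).Walk u w), u ∈ C →
      (∀ x ∈ p.support, x ∈ B ∪ C) →
      (∀ e ∈ p.edges, e ∈ GC.edgeSet) ∧ (∀ x ∈ p.support, x ∈ C) := by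
    intro u w p
    induction p with
    | nil =>
      intro hu _
      refine ⟨fun e he => absurd he (by simp), fun x hx => ?_⟩
      rw [SimpleGraph.Walk.support_nil, List.mem_singleton] at hx
      rw [hx]; exact hu
    | @cons u' v' w' h q ih =>
      intro hu hsupp
      obtain ⟨hadj, hvC⟩ := adjC _ _ hu h
      have hsupp' : ∀ x ∈ q.support, x ∈ B ∪ C := fun x hx =>
        hsupp x (by rw [SimpleGraph.Walk.support_cons]; exact List.mem_cons_of_mem _ hx)
      obtain ⟨he, hs⟩ := ih hvC hsupp'
      constructor
      · intro e he'
        rw [SimpleGraph.Walk.edges_cons, List.mem_cons] at he'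
        rcases he' with h' | h'
        · rw [h']; exact (mem_edgeSet GC).mpr hadj
        · exact he e h'
      · intro x hx
        rw [SimpleGraph.Walk.support_cons, List.mem_cons] at hx
        rcases hx with h' | h'
        · rw [h']; exact hu
        · exact hs x h'
  have walkB : ∀ (u w : V) (p : (GB ⊔ GC).Walk u w), u ∈ B → u ∉ C →
      (∀ x ∈ p.support, x ∈ B ∪ C) →
      (∀ e ∈ p.edges, e ∈ GB.edgeSet) ∧ (∀ x ∈ p.support, x ∈ B) := by
    intro u w p
    induction p with
    | nil =>
      intro hu _ _
      refine ⟨fun e he => absurd he (by simp), fun x hx => ?_⟩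
      rw [SimpleGraph.Walk.support_nil, List.mem_singleton] at hx
      rw [hx]; exact hu
    | @cons u' v' w' h q ih =>
      intro huB huC hsupp
      obtain ⟨hadj, hvB, hvC⟩ := adjB' _ _ huB huC h
      have hsupp' : ∀ x ∈ q.support, x ∈ B ∪ C := fun x hx =>
        hsupp x (by rw [SimpleGraph.Walk.support_cons]; exact List.mem_cons_of_mem _ hx)
      obtain ⟨he, hs⟩ := ih hvB hvC hsupp'
      constructor
      · intro e he'
        rw [SimpleGraph.Walk.edges_cons, List.mem_cons] at he'
        rcases he' with h' | h'
        · rw [h']; exact (mem_edgeSet GB).mpr hadj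
        · exact he e h'
      · intro x hx
        rw [SimpleGraph.Walk.support_cons, List.mem_cons] at hx
        rcases hx with h' | h'
        · rw [h']; exact huB
        · exact hs x h'
  constructor
  · constructor
    · -- positivity
      intro S hS hSne
      rw [dG S hS]
      have h1 : 0 ≤ delta GB (S \ C) := hBnonneg _ (hsdiffB S hS)
      have h2 : 0 ≤ delta GC (S ∩ C) := hCnonneg _ Finset.inter_subset_right
      by_cases h : (S ∩ C).Nonempty
      · have := hCK.1 (S ∩ C) Finset.inter_subset_right h
        linarith
      · rw [Finset.not_nonempty_iff_eq_empty] at h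
        have hSd : (S \ C).Nonempty := by
          obtain ⟨x, hx⟩ := hSne
          refine ⟨x, Finset.mem_sdiff.mpr ⟨hx, fun hxC => ?_⟩⟩
          exact absurd (Finset.mem_inter.mpr ⟨hx, hxC⟩) (by rw [h]; simp)
        have := hBK.1 (S \ C) (hsdiffB S hS) hSd
        rw [h, delta_empty]
        linarith
    · intro n hn
      by_cases hn0 : n = 0
      · rw [if_pos hn0]
        intro a haBC s hs hadj
        by_cases haC : a ∈ C
        · have hall : ∀ b ∈ s, GC.Adj a b ∧ b ∈ C := fun b hb => adjC a b haC (hadj b hb)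
          have h0 := hCK.2 n hn
          rw [if_pos hn0] at h0
          exact h0 a haC s (fun b hb => (hall b hb).2) (fun b hb => (hall b hb).1)
        · have haB : a ∈ B := by
            rcases Finset.mem_union.mp haBC with h | h
            · exact h
            · exact absurd h haC
          have hall : ∀ b ∈ s, GB.Adj a b ∧ b ∈ B := fun b hb =>
            ⟨(adjB' a b haB haC (hadj b hb)).1, (adjB' a b haB haC (hadj b hb)).2.1⟩
          have h0 := hBK.2 n hn
          rw [if_pos hn0] at h0
          exact h0 a haB s (fun b hb => (hall b hb).2) (fun b hb => (hall b hb).1)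
      · rw [if_neg hn0]
        rintro a haBC ⟨s, hsSub, hsAdj, hscard⟩ ⟨y, p, hp, hlen, hsupp⟩
        by_cases haC : a ∈ C
        · obtain ⟨hedges, hsuppC⟩ := walkC a y p haC hsupp
          have h0 := hCK.2 n hn
          rw [if_neg hn0] at h0
          refine h0 a haC ⟨s, fun b hb => (adjC a b haC (hsAdj b hb)).2,
            fun b hb => (adjC a b haC (hsAdj b hb)).1, hscard⟩
            ⟨y, p.transfer GC hedges, hp.transfer hedges, ?_, ?_⟩
          · rw [SimpleGraph.Walk.length_transfer]; exact hlen
          · intro v hv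
            rw [SimpleGraph.Walk.support_transfer] at hv
            exact hsuppC v hv
        · have haB : a ∈ B := by
            rcases Finset.mem_union.mp haBC with h | h
            · exact h
            · exact absurd h haC
          obtain ⟨hedges, hsuppB⟩ := walkB a y p haB haC hsupp
          have h0 := hBK.2 n hn
          rw [if_neg hn0] at h0
          refine h0 a haB ⟨s, fun b hb => (adjB' a b haB haC (hsAdj b hb)).2.1,
            fun b hb => (adjB' a b haB haC (hsAdj b hb)).1, hscard⟩
            ⟨y, p.transfer GB hedges, hp.transfer hedges, ?_, ?_⟩
          · rw [SimpleGraph.Walk.length_transfer]; exact hlen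
          · intro v hv
            rw [SimpleGraph.Walk.support_transfer] at hv
            exact hsuppB v hv
  · refine ⟨Finset.subset_union_right, ?_⟩
    intro S hCS hSsub
    rw [dG S hSsub, dG C Finset.subset_union_right]
    rw [Finset.sdiff_self, Finset.inter_self, delta_empty]
    have hSC : S ∩ C = C := Finset.inter_eq_right.mpr hCS.subset
    have hSd : (S \ C).Nonempty := by
      obtain ⟨x, hxS, hxC⟩ := Finset.exists_of_ssubset hCS
      exact ⟨x, Finset.mem_sdiff.mpr ⟨hxS, hxC⟩⟩
    have hpos := hBK.1 (S \ C) (hsdiffB S hSsub) hSd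
    rw [hSC]
    linarith
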